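/- Let A be an m×n real matrix and ε = (ε_1,…,ε_{min{m,n}}) a sign pattern with ε_0 := 1. Suppose: (a) S^+(Ax) ≤ S^-(x) for all nonzero x ∈ ℝ^n, and (b) whenever Ax ≠ 0 and S^+(Ax) = S^-(x) = r with 0 ≤ r ≤ min{m,n}−1, the sign of the first component of Ax (using the sign from any maximizing completion if it is zero) equals ε_r ε_{r+1} times the sign of the first nonzero component of x. Then A is SSR(ε): every r×r minor of A is nonzero with sign ε_r. -/

import Mathlib

open Matrix Filter

/-- Number of sign changes in a list of reals (consecutive pairs with negative product). -/
noncomputable def signChanges (l : List ℝ) : ℕ :=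
  (l.zip l.tail).countP (fun p => decide (p.1 * p.2 < 0))

/-- `S^-(v)`: sign changes of the coordinates of `v` after discarding zero entries. -/
noncomputable def Sm {n : ℕ} (v : Fin n → ℝ) : ℕ :=
  signChanges ((List.ofFn v).filter (fun x => decide (x ≠ 0)))

/-- `S^+(v)`: maximal number of sign changes over all ±1 completions of the zero
entries of `v`, with the convention `S^+(0) = n`. -/
noncomputable def Sp {n : ℕ} (v : Fin n → ℝ) : ℕ :=
  if v = 0 then n
  else Finset.univ.sup (fun σ : Fin n → Bool =>
    signChanges (List.ofFn (fun i => if v i = 0 then (if σ i then (1:ℝ) else -1) else v i)))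

/-- First nonzero entry of a vector (`0` if the vector is zero). -/
noncomputable def firstNz {n : ℕ} (v : Fin n → ℝ) : ℝ :=
  ((List.ofFn v).filter (fun x => decide (x ≠ 0))).headI

/-- `A` is strictly sign regular with sign pattern `ε`:
every `r × r` minor (`1 ≤ r ≤ min m n`) is nonzero with sign `ε r`. -/
def ssrPattern {m n : ℕ} (A : Matrix (Fin m) (Fin n) ℝ) (ε : ℕ → ℝ) : Prop :=
  ∀ r : ℕ, 1 ≤ r → r ≤ min m n → ∀ (f : Fin r → Fin m) (g : Fin r → Fin n),
    StrictMono f → StrictMono g → 0 < ε r * (A.submatrix f g).det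

/-- `A` is sign regular with sign pattern `ε`:
every nonzero `r × r` minor (`1 ≤ r ≤ min m n`) has sign `ε r`. -/
def srPattern {m n : ℕ} (A : Matrix (Fin m) (Fin n) ℝ) (ε : ℕ → ℝ) : Prop :=
  ∀ r : ℕ, 1 ≤ r → r ≤ min m n → ∀ (f : Fin r → Fin m) (g : Fin r → Fin n),
    StrictMono f → StrictMono g → 0 ≤ ε r * (A.submatrix f g).det

/-- The map `f` picks out consecutive indices. -/
def Contig {r m : ℕ} (f : Fin r → Fin m) : Prop :=
  ∃ a : ℕ, ∀ i : Fin r, (f i : ℕ) = a + (i : ℕ)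

namespace SSRAux

noncomputable def sgn (a : ℝ) : ℝ := if 0 < a then 1 else -1

lemma sgn_eq (a : ℝ) : sgn a = 1 ∨ sgn a = -1 := by unfold sgn; split <;> simp

lemma sgn_ne_zero (a : ℝ) : sgn a ≠ 0 := by rcases sgn_eq a with h | h <;> rw [h] <;> norm_num

lemma sgn_mul_pos {a : ℝ} (h : a ≠ 0) : 0 < sgn a * a := by
  unfold sgn; rcases lt_trichotomy a 0 with h1 | h1 | h1
  · rw [if_neg (by linarith)]; nlinarith
  · exact absurd h1 h
  · rw [if_pos h1]; linarith

lemma chg_nil : signChanges [] = 0 := rfl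

lemma chg_single (a : ℝ) : signChanges [a] = 0 := rfl

lemma chg_cons_cons (a b : ℝ) (t : List ℝ) :
    signChanges (a :: b :: t) = signChanges (b :: t) + (if a * b < 0 then 1 else 0) := by
  unfold signChanges
  rw [show (a :: b :: t).tail = b :: t from rfl, List.zip_cons_cons, List.countP_cons]
  simp

lemma chg_map_neg (l : List ℝ) : signChanges (l.map (fun x => -x)) = signChanges l := by
  induction l with
  | nil => rfl
  | cons a t ih =>
    cases t with
    | nil => rfl
    | cons b t' =>
      rw [List.map_cons, List.map_cons] at *
      rw [chg_cons_cons, chg_cons_cons, ih]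
      congr 1
      simp only [neg_mul_neg]

lemma chg_len {l : List ℝ} (h : l ≠ []) : signChanges l + 1 ≤ l.length := by
  unfold signChanges
  have := List.countP_le_length (l := l.zip l.tail) (p := fun p => decide (p.1 * p.2 < 0))
  rw [List.length_zip, List.length_tail] at this
  cases l with
  | nil => exact absurd rfl h
  | cons a t => simp at this ⊢; omega

lemma mul_sign_transfer {x x' b : ℝ} (h : 0 < x * x') : x * b < 0 ↔ x' * b < 0 := by
  rcases mul_pos_iff.mp h with ⟨h1, h2⟩ | ⟨h1, h2⟩
  · constructor <;> intro hb <;> nlinarith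
  · constructor <;> intro hb <;> nlinarith

lemma chg_head_sign {x x' : ℝ} (t : List ℝ) (h : 0 < x * x') :
    signChanges (x :: t) = signChanges (x' :: t) := by
  cases t with
  | nil => rfl
  | cons b t' =>
    rw [chg_cons_cons, chg_cons_cons]
    congr 1
    simp [mul_sign_transfer h]

lemma chg_head_swap {x e : ℝ} (he : e ≠ 0) (t : List ℝ) :
    signChanges (x :: t) ≤ (if x * e < 0 then 1 else 0) + signChanges (e :: t) := by
  cases t with
  | nil =>
    rw [chg_single, chg_single]
    omega
  | cons b t' =>
    rw [chg_cons_cons, chg_cons_cons]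
    have key : (if x * b < 0 then (1:ℕ) else 0) ≤ (if x * e < 0 then 1 else 0) + (if e * b < 0 then 1 else 0) := by
      by_cases hxb : x * b < 0
      · by_cases h1 : x * e < 0
        · simp [hxb, h1]
        · have h2 : e * b < 0 := by
            push_neg at h1
            have he2 : 0 < e * e := mul_self_pos.mpr he
            nlinarith [mul_nonneg h1 (le_of_lt (neg_pos.mpr hxb))]
          simp [hxb, h1, h2]
      · simp [hxb]
    omega

/-- alternate signs: `altL l` is `fun i => (-1)^i * l i`. -/
def altL : List ℝ → List ℝ
  | [] => []
  | a :: t => a :: (altL t).map (fun x => -x)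

@[simp] lemma altL_nil : altL [] = [] := rfl

@[simp] lemma altL_length (l : List ℝ) : (altL l).length = l.length := by
  induction l with
  | nil => rfl
  | cons a t ih => simp [altL, ih]

lemma altL_getElem (l : List ℝ) (i : ℕ) (h : i < (altL l).length) (h' : i < l.length) :
    (altL l)[i] = (-1 : ℝ)^i * l[i] := by
  induction l generalizing i with
  | nil => simp at h'
  | cons a t ih =>
    cases i with
    | zero => simp [altL]
    | succ j =>
      have hj : j < (altL t).length := by simp [altL] at h; simpa using h
      have hj' : j < t.length := by simpa using h'
      simp only [altL, List.getElem_cons_succ]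
      rw [List.getElem_map, ih j hj hj', pow_succ]
      ring

lemma map_neg_neg (l : List ℝ) : (l.map (fun x => -x)).map (fun x => -x) = l := by
  rw [List.map_map]
  have : ((fun x : ℝ => -x) ∘ (fun x : ℝ => -x)) = id := by funext x; simp
  rw [this, List.map_id]

lemma altL_cons_cons (a b : ℝ) (t : List ℝ) :
    altL (a :: b :: t) = a :: -b :: altL t := by
  show a :: (altL (b :: t)).map (fun x => -x) = _
  show a :: ((b :: (altL t).map (fun x => -x)).map (fun x => -x)) = _
  rw [List.map_cons, map_neg_neg]

lemma D1 {l : List ℝ} (hne : l ≠ []) (hnz : ∀ x ∈ l, x ≠ 0) :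
    signChanges l + signChanges (altL l) + 1 = l.length := by
  induction l with
  | nil => exact absurd rfl hne
  | cons a t ih =>
    cases t with
    | nil => rfl
    | cons b t' =>
      have hab : a ≠ 0 := hnz a (by simp)
      have hbb : b ≠ 0 := hnz b (by simp)
      rw [altL_cons_cons, chg_cons_cons a b, chg_cons_cons a (-b)]
      have hneg : signChanges (-b :: altL t') = signChanges (altL (b :: t')) := by
        have : (-b :: altL t') = (b :: (altL t').map (fun x => -x)).map (fun x => -x) := by
          rw [List.map_cons, map_neg_neg]
        rw [this, chg_map_neg]; rfl
      rw [hneg]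
      have hsum : (if a * b < 0 then 1 else 0) + (if a * -b < 0 then (1:ℕ) else 0) = 1 := by
        have hab2 : a * -b = -(a*b) := by ring
        rcases lt_trichotomy (a*b) 0 with h | h | h
        · rw [if_pos h, if_neg (by rw [hab2]; linarith)]
        · exact absurd h (by simp [mul_eq_zero]; tauto)
        · rw [if_neg (by linarith), if_pos (by rw [hab2]; linarith)]
      have := ih (by simp) (fun x hx => hnz x (by simp [hx]))
      simp only [List.length_cons] at *
      omega

end SSRAux

namespace SSRAux

/-- Greedy completion with carry sign `s`. -/
noncomputable def grd (s : ℝ) : List ℝ → List ℝ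
  | [] => []
  | a :: t => if a = 0 then s :: grd s t else a :: grd (sgn a) t

@[simp] lemma grd_nil (s : ℝ) : grd s [] = [] := rfl

@[simp] lemma grd_length (s : ℝ) (l : List ℝ) : (grd s l).length = l.length := by
  induction l generalizing s with
  | nil => rfl
  | cons a t ih =>
    by_cases h : a = 0 <;> simp [grd, h, ih]

lemma grd_getElem_nz (s : ℝ) (l : List ℝ) (i : ℕ) (h : i < l.length)
    (h' : i < (grd s l).length) (hnz : l[i] ≠ 0) : (grd s l)[i] = l[i] := by
  induction l generalizing s i with
  | nil => simp at h
  | cons a t ih =>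
    by_cases ha : a = 0
    · cases i with
      | zero => simp at hnz; exact absurd ha hnz
      | succ j =>
        have hg : grd s (a :: t) = s :: grd s t := by simp [grd, ha]
        have hlt : j < t.length := by simp only [List.length_cons] at h; omega
        simp only [hg, List.getElem_cons_succ] at hnz ⊢
        exact ih s j hlt (by simp; omega) hnz
    · have hg : grd s (a :: t) = a :: grd (sgn a) t := by simp [grd, ha]
      cases i with
      | zero => simp [hg]
      | succ j =>
        have hlt : j < t.length := by simp only [List.length_cons] at h; omega
        simp only [hg, List.getElem_cons_succ] at hnz ⊢
        exact ih (sgn a) j hlt (by simp; omega) hnz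

lemma grd_getElem_zero (s : ℝ) (hs : s = 1 ∨ s = -1) (l : List ℝ) (i : ℕ) (h : i < l.length)
    (h' : i < (grd s l).length) (hz : l[i] = 0) : (grd s l)[i] = 1 ∨ (grd s l)[i] = -1 := by
  induction l generalizing s i with
  | nil => simp at h
  | cons a t ih =>
    by_cases ha : a = 0
    · have hg : grd s (a :: t) = s :: grd s t := by simp [grd, ha]
      cases i with
      | zero => simp [hg, hs]
      | succ j =>
        have hlt : j < t.length := by simp only [List.length_cons] at h; omega
        simp only [hg, List.getElem_cons_succ] at hz ⊢
        exact ih s hs j hlt (by simp; omega) hz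
    · have hg : grd s (a :: t) = a :: grd (sgn a) t := by simp [grd, ha]
      cases i with
      | zero => simp at hz; exact absurd hz ha
      | succ j =>
        have hlt : j < t.length := by simp only [List.length_cons] at h; omega
        simp only [hg, List.getElem_cons_succ] at hz ⊢
        exact ih (sgn a) (sgn_eq a) j hlt (by simp; omega) hz

lemma grd_ne_zero (s : ℝ) (hs : s ≠ 0) (l : List ℝ) : ∀ x ∈ grd s l, x ≠ 0 := by
  induction l generalizing s with
  | nil => simp
  | cons a t ih =>
    by_cases ha : a = 0
    · have hg : grd s (a :: t) = s :: grd s t := by simp [grd, ha]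
      rw [hg]
      intro x hx
      rcases List.mem_cons.mp hx with h | h
      · rw [h]; exact hs
      · exact ih s hs x h
    · have hg : grd s (a :: t) = a :: grd (sgn a) t := by simp [grd, ha]
      rw [hg]
      intro x hx
      rcases List.mem_cons.mp hx with h | h
      · rw [h]; exact ha
      · exact ih (sgn a) (sgn_ne_zero a) x h

lemma grd_claim (t : List ℝ) : ∀ s : ℝ, s ≠ 0 →
    signChanges (s :: grd s t) = signChanges (s :: t.filter (fun x => decide (x ≠ 0))) := by
  induction t with
  | nil => intro s hs; rfl
  | cons a t' ih =>
    intro s hs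
    by_cases ha : a = 0
    · have hg : grd s (a :: t') = s :: grd s t' := by simp [grd, ha]
      have hf : (a :: t').filter (fun x => decide (x ≠ 0)) = t'.filter (fun x => decide (x ≠ 0)) := by
        simp [ha]
      rw [hg, hf, chg_cons_cons]
      rw [ih s hs]
      have : ¬ (s * s < 0) := by nlinarith [mul_self_nonneg s]
      rw [if_neg this]
      omega
    · have hg : grd s (a :: t') = a :: grd (sgn a) t' := by simp [grd, ha]
      have hf : (a :: t').filter (fun x => decide (x ≠ 0)) = a :: t'.filter (fun x => decide (x ≠ 0)) := by
        simp [ha]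
      rw [hg, hf, chg_cons_cons, chg_cons_cons]
      congr 1
      have hsa : 0 < a * sgn a := by
        have := sgn_mul_pos ha; linarith [mul_comm (sgn a) a, this]
      calc signChanges (a :: grd (sgn a) t')
          = signChanges (sgn a :: grd (sgn a) t') := chg_head_sign _ hsa
        _ = signChanges (sgn a :: t'.filter (fun x => decide (x ≠ 0))) := ih (sgn a) (sgn_ne_zero a)
        _ = signChanges (a :: t'.filter (fun x => decide (x ≠ 0))) :=
            (chg_head_sign _ hsa).symm

lemma grd_chg (l : List ℝ) (hne : l.filter (fun x => decide (x ≠ 0)) ≠ []) :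
    signChanges (grd (sgn ((l.filter (fun x => decide (x ≠ 0))).headI)) l)
      = signChanges (l.filter (fun x => decide (x ≠ 0))) := by
  obtain ⟨f0, F', hFe⟩ : ∃ f0 F', l.filter (fun x => decide (x ≠ 0)) = f0 :: F' := by
    cases hF : l.filter (fun x => decide (x ≠ 0)) with
    | nil => exact absurd hF hne
    | cons f0 F' => exact ⟨f0, F', rfl⟩
  have hf0 : f0 ≠ 0 := by
    have : f0 ∈ l.filter (fun x => decide (x ≠ 0)) := by
      rw [hFe]; exact List.mem_cons_self
    have := List.of_mem_filter this
    simpa using this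
  rw [hFe]
  show signChanges (grd (sgn f0) l) = _
  have hsf : 0 < sgn f0 * f0 := sgn_mul_pos hf0
  induction l with
  | nil => simp at hFe
  | cons a t ih =>
    by_cases ha : a = 0
    · have hg : grd (sgn f0) (a :: t) = sgn f0 :: grd (sgn f0) t := by simp [grd, ha]
      have hft : t.filter (fun x => decide (x ≠ 0)) = f0 :: F' := by
        rw [← hFe]; simp [ha]
      rw [hg, grd_claim t (sgn f0) (sgn_ne_zero f0), hft, chg_cons_cons]
      rw [if_neg (by push_neg; linarith)]
      omega
    · have hg : grd (sgn f0) (a :: t) = a :: grd (sgn a) t := by simp [grd, ha]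
      have hft : a :: t.filter (fun x => decide (x ≠ 0)) = f0 :: F' := by
        rw [← hFe]; simp [ha]
      have hf0a : f0 = a := by
        have := hft; injection this with h1 h2; exact h1.symm
      have haa : 0 < a * sgn a := by
        have := sgn_mul_pos ha; nlinarith
      rw [hg]
      calc signChanges (a :: grd (sgn a) t)
          = signChanges (sgn a :: grd (sgn a) t) := chg_head_sign _ haa
        _ = signChanges (sgn a :: t.filter (fun x => decide (x ≠ 0))) := grd_claim t (sgn a) (sgn_ne_zero a)
        _ = signChanges (a :: t.filter (fun x => decide (x ≠ 0))) := (chg_head_sign _ haa).symm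
        _ = signChanges (f0 :: F') := by rw [hft]

lemma chg_cons_ge (y : ℝ) (t : List ℝ) : signChanges t ≤ signChanges (y :: t) := by
  cases t with
  | nil => simp [chg_nil, chg_single]
  | cons b t' => rw [chg_cons_cons]; omega

lemma C1_aux : ∀ (l cl : List ℝ), cl.length = l.length →
    (∀ i (h : i < l.length) (h' : i < cl.length), l[i] ≠ 0 → cl[i] = l[i]) →
    (∀ i (h : i < cl.length), cl[i] ≠ 0) →
    ∀ x : ℝ, x ≠ 0 →
    signChanges (x :: l.filter (fun x => decide (x ≠ 0))) ≤ signChanges (x :: cl) := by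
  intro l
  induction l with
  | nil =>
    intro cl hlen _ _ x _
    have : cl = [] := List.length_eq_zero_iff.mp (by simpa using hlen)
    simp [this]
  | cons a t ih =>
    intro cl hlen hag hnz x hx
    obtain ⟨cc0, cl', hcl⟩ : ∃ cc0 cl', cl = cc0 :: cl' := by
      cases cl with
      | nil => simp at hlen
      | cons cc0 cl' => exact ⟨cc0, cl', rfl⟩
    subst hcl
    have hlen' : cl'.length = t.length := by simpa using hlen
    have hag' : ∀ i (h : i < t.length) (h' : i < cl'.length), t[i] ≠ 0 → cl'[i] = t[i] := by
      intro i h h' hne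
      have := hag (i+1) (by simpa using Nat.succ_lt_succ h) (by simpa using Nat.succ_lt_succ h') (by simpa using hne)
      simpa using this
    have hnz' : ∀ i (h : i < cl'.length), cl'[i] ≠ 0 := by
      intro i h
      have := hnz (i+1) (by simpa using Nat.succ_lt_succ h)
      simpa using this
    have hc0 : cc0 ≠ 0 := by have := hnz 0 (by simp); simpa using this
    by_cases ha : a = 0
    · have hf : (a :: t).filter (fun x => decide (x ≠ 0)) = t.filter (fun x => decide (x ≠ 0)) := by simp [ha]
      rw [hf]
      calc signChanges (x :: t.filter (fun x => decide (x ≠ 0)))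
          ≤ (if x * cc0 < 0 then 1 else 0) + signChanges (cc0 :: t.filter (fun x => decide (x ≠ 0))) :=
            chg_head_swap hc0 _
        _ ≤ (if x * cc0 < 0 then 1 else 0) + signChanges (cc0 :: cl') := by
            have := ih cl' hlen' hag' hnz' cc0 hc0; omega
        _ = signChanges (x :: cc0 :: cl') := by rw [chg_cons_cons x cc0]; omega
    · have hc0a : cc0 = a := by have := hag 0 (by simp) (by simp) (by simpa using ha); simpa using this
      have hf : (a :: t).filter (fun x => decide (x ≠ 0)) = a :: t.filter (fun x => decide (x ≠ 0)) := by simp [ha]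
      rw [hf, chg_cons_cons x a, hc0a, chg_cons_cons x a]
      have := ih cl' hlen' hag' hnz' a ha
      omega

lemma C1 (l cl : List ℝ) (hlen : cl.length = l.length)
    (hag : ∀ i (h : i < l.length) (h' : i < cl.length), l[i] ≠ 0 → cl[i] = l[i])
    (hnz : ∀ i (h : i < cl.length), cl[i] ≠ 0) :
    signChanges (l.filter (fun x => decide (x ≠ 0))) ≤ signChanges cl := by
  cases cl with
  | nil =>
    have : l = [] := List.length_eq_zero_iff.mp (by simpa using hlen.symm)
    simp [this, chg_nil]
  | cons cc0 cl' =>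
    have hc0 : cc0 ≠ 0 := by have := hnz 0 (by simp); simpa using this
    calc signChanges (l.filter (fun x => decide (x ≠ 0)))
        ≤ signChanges (cc0 :: l.filter (fun x => decide (x ≠ 0))) := chg_cons_ge _ _
      _ ≤ signChanges (cc0 :: cc0 :: cl') := C1_aux l (cc0 :: cl') hlen hag hnz cc0 hc0
      _ = signChanges (cc0 :: cl') := by
          rw [chg_cons_cons]
          rw [if_neg (by nlinarith [mul_self_nonneg cc0])]
          omega

lemma filter_headI_eq : ∀ (l : List ℝ) (j : ℕ) (h : j < l.length), l[j] ≠ 0 →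
    (∀ k (hk : k < l.length), k < j → l[k] = 0) →
    (l.filter (fun x => decide (x ≠ 0))).headI = l[j] := by
  intro l
  induction l with
  | nil => intro j h; simp at h
  | cons a t ih =>
    intro j h hj hz
    cases j with
    | zero =>
      simp only [List.getElem_cons_zero] at hj ⊢
      simp [hj]
    | succ j' =>
      have ha : a = 0 := hz 0 (by simp) (by omega)
      have hf : (a :: t).filter (fun x => decide (x ≠ 0)) = t.filter (fun x => decide (x ≠ 0)) := by simp [ha]
      rw [hf]
      simp only [List.getElem_cons_succ] at hj ⊢
      exact ih j' (by simpa using h) hj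
        (fun k hk hkj => by
          have := hz (k+1) (by simpa using Nat.succ_lt_succ hk) (by omega)
          simpa using this)

lemma zip_tail_sub {q : ℝ × ℝ} (a : ℝ) (F : List ℝ) (h : q ∈ F.zip F.tail) :
    q ∈ (a :: F).zip ((a :: F).tail) := by
  cases F with
  | nil => simp at h
  | cons f0 F' =>
    show q ∈ (a :: f0 :: F').zip (f0 :: F')
    rw [List.zip_cons_cons]
    exact List.mem_cons_of_mem _ h

lemma adjBridge : ∀ (l : List ℝ),
    (∀ q ∈ (l.filter (fun x => decide (x ≠ 0))).zip (l.filter (fun x => decide (x ≠ 0))).tail,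
      q.1 * q.2 < 0) →
    ∀ j (h : j + 1 < l.length), l[j] ≠ 0 → l[j+1] ≠ 0 → l[j] * l[j+1] < 0 := by
  intro l
  induction l with
  | nil => intro _ j h; simp at h
  | cons a t ih =>
    intro hyp j h hj hj1
    cases j with
    | zero =>
      simp only [List.getElem_cons_zero, List.getElem_cons_succ] at hj hj1 ⊢
      obtain ⟨b, t', hbt⟩ : ∃ b t', t = b :: t' := by
        cases t with
        | nil => simp at h
        | cons b t' => exact ⟨b, t', rfl⟩
      subst hbt
      simp only [List.getElem_cons_zero] at hj1 ⊢
      have hf : (a :: b :: t').filter (fun x => decide (x ≠ 0))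
          = a :: b :: t'.filter (fun x => decide (x ≠ 0)) := by simp [hj, hj1]
      have hmem : (a, b) ∈ ((a :: b :: t'.filter (fun x => decide (x ≠ 0))).zip
          ((a :: b :: t'.filter (fun x => decide (x ≠ 0))).tail)) := by
        rw [show (a :: b :: t'.filter (fun x => decide (x ≠ 0))).tail
            = b :: t'.filter (fun x => decide (x ≠ 0)) from rfl, List.zip_cons_cons]
        exact List.mem_cons_self
      have := hyp (a, b) (by rw [hf]; exact hmem)
      simpa using this
    | succ j' =>
      simp only [List.getElem_cons_succ] at hj hj1 ⊢
      apply ih _ j' (by simpa using h) hj hj1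
      intro q hq
      apply hyp
      by_cases ha : a = 0
      · have : (a :: t).filter (fun x => decide (x ≠ 0)) = t.filter (fun x => decide (x ≠ 0)) := by simp [ha]
        rw [this]; exact hq
      · have : (a :: t).filter (fun x => decide (x ≠ 0)) = a :: t.filter (fun x => decide (x ≠ 0)) := by simp [ha]
        rw [this]; exact zip_tail_sub a _ hq

lemma length_filter_ofFn : ∀ {N : ℕ} (v : Fin N → ℝ),
    ((List.ofFn v).filter (fun x => decide (x ≠ 0))).length
      = (Finset.univ.filter (fun i => v i ≠ 0)).card := by
  intro N
  induction N with
  | zero => intro v; simp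
  | succ N ih =>
    intro v
    rw [List.ofFn_succ]
    rw [Finset.card_filter, Fin.sum_univ_succ, ← Finset.card_filter]
    by_cases h : v 0 = 0
    · rw [List.filter_cons_of_neg (by simpa using h), ih (fun i => v i.succ), if_neg (by simpa using h)]
      omega
    · rw [List.filter_cons_of_pos (by simpa using h), if_pos (by simpa using h)]
      simp only [List.length_cons]
      rw [ih (fun i => v i.succ)]
      omega

end SSRAux


namespace SSRAux

lemma exists_nz {N : ℕ} {v : Fin N → ℝ} (h : v ≠ 0) : ∃ j, v j ≠ 0 := by
  by_contra hc
  push_neg at hc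
  exact h (funext fun i => hc i)

lemma filter_ofFn_ne_nil {N : ℕ} {v : Fin N → ℝ} (h : v ≠ 0) :
    (List.ofFn v).filter (fun x => decide (x ≠ 0)) ≠ [] := by
  obtain ⟨j, hj⟩ := exists_nz h
  have hmem : v j ∈ (List.ofFn v).filter (fun x => decide (x ≠ 0)) :=
    List.mem_filter.mpr ⟨List.mem_ofFn.mpr ⟨j, rfl⟩, by simpa using hj⟩
  exact List.ne_nil_of_mem hmem

lemma altL_ofFn {N : ℕ} (v : Fin N → ℝ) :
    altL (List.ofFn v) = List.ofFn (fun i => (-1:ℝ)^(i:ℕ) * v i) := by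
  apply List.ext_getElem
  · simp
  · intro i h1 h2
    rw [altL_getElem _ i h1 (by simpa using h1)]
    rw [List.getElem_ofFn, List.getElem_ofFn]

lemma neg_one_pow_sq_mul (i : ℕ) (y : ℝ) : (-1:ℝ)^i * ((-1:ℝ)^i * y) = y := by
  rw [← mul_assoc, ← pow_add]
  have : Even (i + i) := ⟨i, rfl⟩
  rw [this.neg_one_pow, one_mul]

/-- the σ-completion used in `Sp`. -/
noncomputable def cst {N : ℕ} (v : Fin N → ℝ) (σ : Fin N → Bool) : Fin N → ℝ :=
  fun i => if v i = 0 then (if σ i then (1:ℝ) else -1) else v i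

lemma cst_ne_zero {N : ℕ} (v : Fin N → ℝ) (σ : Fin N → Bool) (i : Fin N) : cst v σ i ≠ 0 := by
  unfold cst
  split
  · split <;> norm_num
  · assumption

lemma exists_sigma {N : ℕ} (v : Fin N → ℝ) (cl : List ℝ) (hlen : cl.length = N)
    (hag : ∀ (i : ℕ) (h : i < N) (h' : i < cl.length), v ⟨i, h⟩ ≠ 0 → cl[i] = v ⟨i, h⟩)
    (hz : ∀ (i : ℕ) (h : i < N) (h' : i < cl.length), v ⟨i, h⟩ = 0 → cl[i] = 1 ∨ cl[i] = -1) :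
    ∃ σ : Fin N → Bool, List.ofFn (cst v σ) = cl := by
  refine ⟨fun i => decide (0 < cl[(i:ℕ)]'(by omega)), ?_⟩
  apply List.ext_getElem
  · simp [hlen]
  · intro i h1 h2
    rw [List.getElem_ofFn]
    have hiN : i < N := by simpa using h1
    unfold cst
    by_cases hv : v ⟨i, hiN⟩ = 0
    · rw [if_pos hv]
      rcases hz i hiN h2 hv with h' | h'
      · simp only [h']
        norm_num
      · simp only [h']
        norm_num
    · rw [if_neg hv]
      exact (hag i hiN h2 hv).symm

lemma Sp_dual {N : ℕ} {v : Fin N → ℝ} (h : v ≠ 0) :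
    Sp v + Sm (fun i => (-1:ℝ)^(i:ℕ) * v i) + 1 = N := by
  obtain ⟨j, hj⟩ := exists_nz h
  have hN : 0 < N := Fin.pos j
  have hva_nz : ∀ i : Fin N, ((-1:ℝ)^(i:ℕ) * v i = 0) ↔ v i = 0 := by
    intro i
    simp [pow_ne_zero]
  have hvane : (fun i : Fin N => (-1:ℝ)^(i:ℕ) * v i) ≠ 0 := by
    intro hc
    exact hj ((hva_nz j).mp (congrFun hc j))
  have hFne := filter_ofFn_ne_nil hvane
  have hSmle : Sm (fun i : Fin N => (-1:ℝ)^(i:ℕ) * v i) + 1 ≤ N := by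
    have h1 := chg_len hFne
    have h2 : ((List.ofFn (fun i : Fin N => (-1:ℝ)^(i:ℕ) * v i)).filter
        (fun x => decide (x ≠ 0))).length ≤ N := by
      have := List.length_filter_le (fun x => decide (x ≠ 0))
        (List.ofFn (fun i : Fin N => (-1:ℝ)^(i:ℕ) * v i))
      simpa using this
    unfold Sm
    omega
  have hSp : Sp v = Finset.univ.sup (fun σ : Fin N → Bool =>
      signChanges (List.ofFn (cst v σ))) := by
    unfold Sp cst
    rw [if_neg h]
  -- upper bound
  have hup : ∀ σ : Fin N → Bool,
      signChanges (List.ofFn (cst v σ)) + Sm (fun i : Fin N => (-1:ℝ)^(i:ℕ) * v i) + 1 ≤ N := by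
    intro σ
    have hLlen : (List.ofFn (cst v σ)).length = N := by simp
    have hLne : List.ofFn (cst v σ) ≠ [] := by
      intro hc
      rw [hc] at hLlen
      simp at hLlen
      omega
    have hLnz : ∀ x ∈ List.ofFn (cst v σ), x ≠ 0 := by
      intro x hx
      obtain ⟨i, hi⟩ := List.mem_ofFn.mp hx
      rw [← hi]
      exact cst_ne_zero v σ i
    have hD1 := D1 hLne hLnz
    rw [hLlen] at hD1
    have hle : Sm (fun i : Fin N => (-1:ℝ)^(i:ℕ) * v i)
        ≤ signChanges (altL (List.ofFn (cst v σ))) := by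
      rw [altL_ofFn (cst v σ)]
      unfold Sm
      apply C1
      · simp
      · intro i hi hi' hnz
        rw [List.getElem_ofFn, List.getElem_ofFn]
        rw [List.getElem_ofFn] at hnz
        have hvnz : v ⟨i, by simpa using hi⟩ ≠ 0 := by
          intro hc
          exact hnz (by rw [hc]; ring)
        unfold cst
        rw [if_neg hvnz]
      · intro i hi
        rw [List.getElem_ofFn]
        intro hc
        rcases mul_eq_zero.mp hc with hc' | hc'
        · exact absurd hc' (pow_ne_zero _ (by norm_num))
        · exact cst_ne_zero v σ _ hc'
    omega
  -- lower bound
  have hlow : ∃ σ : Fin N → Bool,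
      signChanges (List.ofFn (cst v σ)) + Sm (fun i : Fin N => (-1:ℝ)^(i:ℕ) * v i) + 1 = N := by
    obtain ⟨s, hsdef, hs1⟩ : ∃ s : ℝ, s = sgn (((List.ofFn (fun i : Fin N => (-1:ℝ)^(i:ℕ) * v i)).filter
        (fun x => decide (x ≠ 0))).headI) ∧ (s = 1 ∨ s = -1) :=
      ⟨_, rfl, sgn_eq _⟩
    have hgl : (grd s (List.ofFn (fun i : Fin N => (-1:ℝ)^(i:ℕ) * v i))).length = N := by
      rw [grd_length]; simp
    have hgnz : ∀ x ∈ grd s (List.ofFn (fun i : Fin N => (-1:ℝ)^(i:ℕ) * v i)), x ≠ 0 :=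
      grd_ne_zero s (by rcases hs1 with h' | h' <;> rw [h'] <;> norm_num) _
    have hgne : grd s (List.ofFn (fun i : Fin N => (-1:ℝ)^(i:ℕ) * v i)) ≠ [] := by
      intro hc
      rw [hc] at hgl
      simp at hgl
      omega
    have hchg : signChanges (grd s (List.ofFn (fun i : Fin N => (-1:ℝ)^(i:ℕ) * v i)))
        = Sm (fun i : Fin N => (-1:ℝ)^(i:ℕ) * v i) := by
      rw [hsdef]
      exact grd_chg _ hFne
    have hD1 := D1 hgne hgnz
    rw [hgl, hchg] at hD1
    have hlen2 : (altL (grd s (List.ofFn (fun i : Fin N => (-1:ℝ)^(i:ℕ) * v i)))).length = N := by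
      rw [altL_length, hgl]
    obtain ⟨σ, hσ⟩ := exists_sigma v (altL (grd s (List.ofFn (fun i : Fin N => (-1:ℝ)^(i:ℕ) * v i))))
      hlen2
      (by
        intro i hiN h' hnz
        have hilen : i < (List.ofFn (fun i : Fin N => (-1:ℝ)^(i:ℕ) * v i)).length := by simp; omega
        rw [altL_getElem _ i h' (by omega)]
        rw [grd_getElem_nz s _ i hilen (by omega)
          (by rw [List.getElem_ofFn]; exact fun hc => hnz ((hva_nz _).mp hc))]
        rw [List.getElem_ofFn]
        exact neg_one_pow_sq_mul i _
      )
      (by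
        intro i hiN h' hz
        have hilen : i < (List.ofFn (fun i : Fin N => (-1:ℝ)^(i:ℕ) * v i)).length := by simp; omega
        rw [altL_getElem _ i h' (by omega)]
        have := grd_getElem_zero s hs1 _ i hilen (by omega)
          (by rw [List.getElem_ofFn]; rw [hz]; ring)
        rcases this with h'' | h'' <;> rw [h''] <;>
          rcases Nat.even_or_odd i with he | he <;>
            simp [he.neg_one_pow, Odd.neg_one_pow, he]
      )
    refine ⟨σ, ?_⟩
    rw [hσ]
    omega
  obtain ⟨σ0, hσ0⟩ := hlow
  have h1 : Sp v ≤ N - 1 - Sm (fun i : Fin N => (-1:ℝ)^(i:ℕ) * v i) := by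
    rw [hSp]
    apply Finset.sup_le
    intro σ _
    have := hup σ
    omega
  have h2 : N - 1 - Sm (fun i : Fin N => (-1:ℝ)^(i:ℕ) * v i) ≤ Sp v := by
    rw [hSp]
    have hle : signChanges (List.ofFn (cst v σ0)) ≤ Finset.univ.sup
        (fun σ : Fin N → Bool => signChanges (List.ofFn (cst v σ))) :=
      Finset.le_sup (f := fun σ : Fin N → Bool => signChanges (List.ofFn (cst v σ)))
        (Finset.mem_univ σ0)
    omega
  omega


lemma grd_spec {N : ℕ} (u : Fin N → ℝ) (hu : u ≠ 0) :
    ∃ cc : List ℝ, cc.length = N ∧ (∀ z ∈ cc, z ≠ 0) ∧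
      (∀ (i : ℕ) (h : i < N), u ⟨i, h⟩ ≠ 0 → cc.getD i 0 = u ⟨i, h⟩) ∧
      signChanges cc = Sm u := by
  refine ⟨grd (sgn (firstNz u)) (List.ofFn u), ?_, ?_, ?_, ?_⟩
  · rw [grd_length]; simp
  · exact grd_ne_zero _ (sgn_ne_zero _) _
  · intro i h hnz
    have hlen : (grd (sgn (firstNz u)) (List.ofFn u)).length = N := by
      rw [grd_length]; simp
    rw [List.getD_eq_getElem _ _ (by omega)]
    rw [grd_getElem_nz _ _ i (by simp; omega) (by omega)
      (by rw [List.getElem_ofFn]; simpa using hnz)]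
    rw [List.getElem_ofFn]
  · exact grd_chg _ (filter_ofFn_ne_nil hu)

lemma exists_completion {N : ℕ} (v : Fin N → ℝ) (hv : v ≠ 0) :
    ∃ w : Fin N → ℝ, (∀ i, v i ≠ 0 → w i = v i) ∧ (∀ i, w i ≠ 0) ∧ Sm w = Sp v := by
  have hune : (fun i : Fin N => (-1:ℝ)^(i:ℕ) * v i) ≠ 0 := by
    intro hc
    obtain ⟨j, hj⟩ := exists_nz hv
    have := congrFun hc j
    simp only [Pi.zero_apply, mul_eq_zero] at this
    rcases this with h' | h'
    · exact absurd h' (pow_ne_zero _ (by norm_num))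
    · exact hj h'
  obtain ⟨j0, hj0⟩ := exists_nz hv
  have hN : 0 < N := Fin.pos j0
  obtain ⟨cc, hlen, hnz, hag, hchg⟩ := grd_spec (fun i : Fin N => (-1:ℝ)^(i:ℕ) * v i) hune
  have hccne : cc ≠ [] := by
    intro hc; rw [hc] at hlen; simp at hlen; omega
  refine ⟨fun i => (-1:ℝ)^(i:ℕ) * cc.getD (i:ℕ) 0, ?_, ?_, ?_⟩
  · intro i hi
    show (-1:ℝ)^(i:ℕ) * cc.getD (i:ℕ) 0 = v i
    rw [hag (i:ℕ) i.isLt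
      (by simp only [Fin.eta]; exact mul_ne_zero (pow_ne_zero _ (by norm_num)) hi)]
    simp only [Fin.eta]
    exact neg_one_pow_sq_mul _ _
  · intro i
    show (-1:ℝ)^(i:ℕ) * cc.getD (i:ℕ) 0 ≠ 0
    refine mul_ne_zero (pow_ne_zero _ (by norm_num)) ?_
    rw [List.getD_eq_getElem _ _ (by rw [hlen]; exact i.isLt)]
    exact hnz _ (List.getElem_mem _)
  · have hofnw : List.ofFn (fun i : Fin N => (-1:ℝ)^(i:ℕ) * cc.getD (i:ℕ) 0) = altL cc := by
      apply List.ext_getElem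
      · rw [List.length_ofFn, altL_length, hlen]
      · intro i h1 h2
        rw [List.getElem_ofFn]
        have hic : i < cc.length := by simpa using h2
        rw [altL_getElem cc i h2 hic]
        simp only []
        rw [List.getD_eq_getElem _ _ hic]
    have hD1 := D1 hccne hnz
    have hdual := Sp_dual hv
    unfold Sm
    rw [hofnw]
    rw [List.filter_eq_self.mpr (by
      intro a ha'
      rw [← hofnw] at ha'
      obtain ⟨i, hi⟩ := List.mem_ofFn.mp ha'
      rw [← hi]
      simp only [decide_eq_true_eq]
      refine mul_ne_zero (pow_ne_zero _ (by norm_num)) ?_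
      rw [List.getD_eq_getElem _ _ (by rw [hlen]; exact i.isLt)]
      exact hnz _ (List.getElem_mem _))]
    rw [hlen, hchg] at hD1
    omega

lemma Sm_card_le {N : ℕ} {v : Fin N → ℝ} (h : v ≠ 0) :
    Sm v + 1 ≤ (Finset.univ.filter (fun i => v i ≠ 0)).card := by
  have h1 := chg_len (filter_ofFn_ne_nil h)
  rw [length_filter_ofFn] at h1
  exact h1

lemma Sm_full_alt {N : ℕ} {v : Fin N → ℝ} (h : v ≠ 0)
    (hful : Sm v + 1 = (Finset.univ.filter (fun i => v i ≠ 0)).card) :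
    ∀ j : ℕ, (hj : j + 1 < N) → v ⟨j, by omega⟩ ≠ 0 → v ⟨j+1, hj⟩ ≠ 0 →
      v ⟨j, by omega⟩ * v ⟨j+1, hj⟩ < 0 := by
  have hlen : ((List.ofFn v).filter (fun x => decide (x ≠ 0))).length
      = (Finset.univ.filter (fun i => v i ≠ 0)).card := length_filter_ofFn v
  have hFne : (List.ofFn v).filter (fun x => decide (x ≠ 0)) ≠ [] := filter_ofFn_ne_nil h
  have hzip : (((List.ofFn v).filter (fun x => decide (x ≠ 0))).zip
      ((List.ofFn v).filter (fun x => decide (x ≠ 0))).tail).length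
      = ((List.ofFn v).filter (fun x => decide (x ≠ 0))).length - 1 := by
    rw [List.length_zip, List.length_tail]
    omega
  have hcount : (((List.ofFn v).filter (fun x => decide (x ≠ 0))).zip
      ((List.ofFn v).filter (fun x => decide (x ≠ 0))).tail).countP (fun p => decide (p.1 * p.2 < 0))
      = (((List.ofFn v).filter (fun x => decide (x ≠ 0))).zip
      ((List.ofFn v).filter (fun x => decide (x ≠ 0))).tail).length := by
    show signChanges ((List.ofFn v).filter (fun x => decide (x ≠ 0))) = _
    rw [hzip]
    have : Sm v = signChanges ((List.ofFn v).filter (fun x => decide (x ≠ 0))) := rfl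
    omega
  have hall : ∀ q ∈ ((List.ofFn v).filter (fun x => decide (x ≠ 0))).zip
      ((List.ofFn v).filter (fun x => decide (x ≠ 0))).tail, q.1 * q.2 < 0 := by
    intro q hq
    have := List.countP_eq_length.mp hcount q hq
    simpa using this
  intro j hj h1 h2
  have := adjBridge (List.ofFn v) hall j (by simpa using hj)
    (by rw [List.getElem_ofFn]; exact h1) (by rw [List.getElem_ofFn]; exact h2)
  rw [List.getElem_ofFn, List.getElem_ofFn] at this
  exact this

lemma firstNz_eq {N : ℕ} (v : Fin N → ℝ) (j : Fin N) (hj : v j ≠ 0)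
    (hfirst : ∀ k : Fin N, (k:ℕ) < (j:ℕ) → v k = 0) : firstNz v = v j := by
  unfold firstNz
  have := filter_headI_eq (List.ofFn v) (j:ℕ) (by simp) (by rw [List.getElem_ofFn]; simpa using hj)
    (fun k hk hkj => by
      rw [List.getElem_ofFn]
      exact hfirst ⟨k, by simpa using hk⟩ (by simpa using hkj))
  rw [this, List.getElem_ofFn]

end SSRAux


namespace SSRAux

lemma cons_comp_succ {r m : ℕ} (i : Fin m) (γ : Fin r → Fin m) :
    (Fin.cons i γ : Fin (r+1) → Fin m) ∘ Fin.succ = γ := by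
  funext t
  simp [Fin.cons_succ]

lemma mulVec_cramer {m n r : ℕ} (A : Matrix (Fin m) (Fin n) ℝ) (γ : Fin r → Fin m)
    (g : Fin (r+1) → Fin n) (i : Fin m) :
    (A *ᵥ (fun j => ∑ k : Fin (r+1),
        if j = g k then (-1:ℝ)^(k:ℕ) * (A.submatrix γ (g ∘ k.succAbove)).det else 0)) i
      = (A.submatrix (Fin.cons i γ) g).det := by
  have lhs : (A *ᵥ (fun j => ∑ k : Fin (r+1),
      if j = g k then (-1:ℝ)^(k:ℕ) * (A.submatrix γ (g ∘ k.succAbove)).det else 0)) i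
      = ∑ k : Fin (r+1), A i (g k) * ((-1:ℝ)^(k:ℕ) * (A.submatrix γ (g ∘ k.succAbove)).det) := by
    show ∑ j, A i j * _ = _
    have : ∀ j, A i j * (∑ k : Fin (r+1),
        if j = g k then (-1:ℝ)^(k:ℕ) * (A.submatrix γ (g ∘ k.succAbove)).det else 0)
        = ∑ k : Fin (r+1), if j = g k then A i j * ((-1:ℝ)^(k:ℕ) * (A.submatrix γ (g ∘ k.succAbove)).det) else 0 := by
      intro j
      rw [Finset.mul_sum]
      apply Finset.sum_congr rfl
      intro k _
      rw [mul_ite, mul_zero]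
    simp_rw [this]
    rw [Finset.sum_comm]
    apply Finset.sum_congr rfl
    intro k _
    have : ∀ j : Fin n, (if j = g k then A i j * ((-1:ℝ)^(k:ℕ) * (A.submatrix γ (g ∘ k.succAbove)).det) else 0)
        = (if j = g k then A i (g k) * ((-1:ℝ)^(k:ℕ) * (A.submatrix γ (g ∘ k.succAbove)).det) else 0) := by
      intro j
      split
      · rename_i hj; rw [hj]
      · rfl
    simp_rw [this]
    rw [Finset.sum_ite_eq' Finset.univ (g k)]
    simp
  rw [lhs, Matrix.det_succ_row_zero]
  apply Finset.sum_congr rfl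
  intro k _
  rw [Matrix.submatrix_submatrix, cons_comp_succ]
  have : (A.submatrix (Fin.cons i γ) g) 0 k = A i (g k) := by
    simp [Matrix.submatrix_apply]
  rw [this]
  ring

lemma row_dup_det_zero {m n r : ℕ} (A : Matrix (Fin m) (Fin n) ℝ) (γ : Fin r → Fin m)
    (g : Fin (r+1) → Fin n) (t : Fin r) :
    (A.submatrix (Fin.cons (γ t) γ) g).det = 0 := by
  apply Matrix.det_zero_of_row_eq (i := 0) (j := t.succ)
  · exact (Fin.succ_ne_zero t).symm
  · funext b
    simp [Matrix.submatrix_apply, Fin.cons_succ]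

lemma sign_helper {e t : ℝ} (he : e = 1 ∨ e = -1) (h : 0 < e * t) :
    t ≠ 0 ∧ Real.sign t = e := by
  rcases he with h' | h' <;> subst h'
  · rw [one_mul] at h
    exact ⟨ne_of_gt h, Real.sign_of_pos h⟩
  · have ht : t < 0 := by nlinarith
    exact ⟨ne_of_lt ht, Real.sign_of_neg ht⟩

lemma sign_helper' {e t : ℝ} (he : e = 1 ∨ e = -1) (ht : t ≠ 0) (h : Real.sign t = e) :
    0 < e * t := by
  rcases lt_trichotomy t 0 with h' | h' | h'
  · rw [Real.sign_of_neg h'] at h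
    rcases he with h'' | h'' <;> subst h''
    · norm_num at h
    · nlinarith
  · exact absurd h' ht
  · rw [Real.sign_of_pos h'] at h
    rcases he with h'' | h'' <;> subst h''
    · nlinarith
    · norm_num at h

end SSRAux

theorem stmt5 {m n : ℕ} (A : Matrix (Fin m) (Fin n) ℝ) (ε : ℕ → ℝ)
    (hε0 : ε 0 = 1) (hsv : ∀ r, ε r = 1 ∨ ε r = -1)
    (ha : ∀ x : Fin n → ℝ, x ≠ 0 → Sp (A *ᵥ x) ≤ Sm x)
    (hb : ∀ x : Fin n → ℝ, A *ᵥ x ≠ 0 → ∀ r : ℕ, r ≤ min m n - 1 →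
      Sp (A *ᵥ x) = r → Sm x = r →
      ∀ w : Fin m → ℝ, (∀ i, (A *ᵥ x) i ≠ 0 → w i = (A *ᵥ x) i) → (∀ i, w i ≠ 0) →
        Sm w = Sp (A *ᵥ x) →
        ∀ i0 : Fin m, (i0 : ℕ) = 0 →
          Real.sign (w i0) = ε r * ε (r + 1) * Real.sign (firstNz x)) :
    ssrPattern A ε := by
  classical
  have main : ∀ r : ℕ, r ≤ min m n → ∀ (f : Fin r → Fin m) (g : Fin r → Fin n),
      StrictMono f → StrictMono g → 0 < ε r * (A.submatrix f g).det := by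
    intro r
    induction r with
    | zero =>
      intro _ f g _ _
      rw [Matrix.det_fin_zero, hε0]
      norm_num
    | succ r ih =>
      intro hr1 f g hf hg
      have hrm : r + 1 ≤ m := le_trans hr1 (min_le_left _ _)
      have hrn : r + 1 ≤ n := le_trans hr1 (min_le_right _ _)
      have hm : 0 < m := by omega
      set γ : Fin r → Fin m := f ∘ Fin.succ with hγdef
      have hγ : StrictMono γ := hf.comp Fin.strictMono_succ
      have hd : ∀ k : Fin (r+1), 0 < ε r * (A.submatrix γ (g ∘ k.succAbove)).det :=
        fun k => ih (by omega) γ (g ∘ k.succAbove) hγ (hg.comp (Fin.strictMono_succAbove k))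
      have hdne : ∀ k : Fin (r+1), (A.submatrix γ (g ∘ k.succAbove)).det ≠ 0 ∧
          Real.sign ((A.submatrix γ (g ∘ k.succAbove)).det) = ε r :=
        fun k => SSRAux.sign_helper (hsv r) (hd k)
      set x : Fin n → ℝ := fun j => ∑ k : Fin (r+1),
        if j = g k then (-1:ℝ)^(k:ℕ) * (A.submatrix γ (g ∘ k.succAbove)).det else 0 with hxdef
      have hxg : ∀ k : Fin (r+1),
          x (g k) = (-1:ℝ)^(k:ℕ) * (A.submatrix γ (g ∘ k.succAbove)).det := by
        intro k
        rw [hxdef]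
        simp only []
        rw [Finset.sum_eq_single k]
        · rw [if_pos rfl]
        · intro k' _ hk'
          rw [if_neg (fun hc => hk' (hg.injective hc.symm))]
        · intro hk; exact absurd (Finset.mem_univ k) hk
      have hx0 : ∀ j : Fin n, (∀ k, j ≠ g k) → x j = 0 := by
        intro j hj
        rw [hxdef]
        simp only []
        apply Finset.sum_eq_zero
        intro k _
        rw [if_neg (hj k)]
      have hxgne : ∀ k, x (g k) ≠ 0 := by
        intro k
        rw [hxg k]
        exact mul_ne_zero (pow_ne_zero _ (by norm_num)) (hdne k).1
      have hxne : x ≠ 0 := by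
        intro hc
        exact hxgne 0 (by rw [hc]; rfl)
      have hsupp : Finset.univ.filter (fun j => x j ≠ 0) = Finset.univ.image g := by
        ext j
        simp only [Finset.mem_filter, Finset.mem_image, Finset.mem_univ, true_and]
        constructor
        · intro hxj
          by_contra hc
          push_neg at hc
          exact hxj (hx0 j (fun k hk => hc k hk.symm))
        · rintro ⟨k, _, rfl⟩
          exact hxgne k
      have hSmx_le : Sm x ≤ r := by
        have h1 := SSRAux.Sm_card_le hxne
        rw [hsupp, Finset.card_image_of_injective _ hg.injective, Finset.card_univ,
          Fintype.card_fin] at h1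
        omega
      set y : Fin m → ℝ := A *ᵥ x with hy
      have hyi : ∀ i : Fin m, y i = (A.submatrix (Fin.cons i γ) g).det := by
        intro i
        rw [hy, hxdef]
        exact SSRAux.mulVec_cramer A γ g i
      have hyzero : ∀ t : Fin r, y (γ t) = 0 := by
        intro t
        rw [hyi (γ t)]
        exact SSRAux.row_dup_det_zero A γ g t
      have hSpSm := ha x hxne
      rw [← hy] at hSpSm
      have hyne : y ≠ 0 := by
        intro hc
        rw [hc] at hSpSm
        unfold Sp at hSpSm
        rw [if_pos rfl] at hSpSm
        omega
      have htilne : (fun i : Fin m => (-1:ℝ)^(i:ℕ) * y i) ≠ 0 := by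
        intro hc
        obtain ⟨j, hj⟩ := SSRAux.exists_nz hyne
        have := congrFun hc j
        simp only [Pi.zero_apply, mul_eq_zero] at this
        rcases this with h' | h'
        · exact absurd h' (pow_ne_zero _ (by norm_num))
        · exact hj h'
      have hdual := SSRAux.Sp_dual hyne
      have hfiltil : Finset.univ.filter (fun i : Fin m => (-1:ℝ)^(i:ℕ) * y i ≠ 0)
          = Finset.univ.filter (fun i => y i ≠ 0) := by
        apply Finset.filter_congr
        intro i _
        simp [pow_ne_zero, sub_eq_zero]
      have him : (Finset.univ.image γ).card = r := by
        rw [Finset.card_image_of_injective _ hγ.injective, Finset.card_univ, Fintype.card_fin]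
      have hsub : Finset.univ.filter (fun i => y i ≠ 0) ⊆ Finset.univ \ Finset.univ.image γ := by
        intro i hi
        rw [Finset.mem_sdiff]
        refine ⟨Finset.mem_univ _, ?_⟩
        intro hc
        obtain ⟨t, _, ht⟩ := Finset.mem_image.mp hc
        have := hyzero t
        rw [ht] at this
        exact (Finset.mem_filter.mp hi).2 this
      have hcompl : (Finset.univ \ Finset.univ.image γ).card = m - r := by
        rw [Finset.card_sdiff_of_subset (Finset.subset_univ _), Finset.card_univ, Fintype.card_fin, him]
      have hcardle : (Finset.univ.filter (fun i => y i ≠ 0)).card ≤ m - r :=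
        le_trans (Finset.card_le_card hsub) (le_of_eq hcompl)
      have hSmtil_le := SSRAux.Sm_card_le htilne
      rw [hfiltil] at hSmtil_le
      have hSpy : Sp y = r := by omega
      have hcard_eq : (Finset.univ.filter (fun i => y i ≠ 0)).card = m - r := by omega
      have hSmty : Sm (fun i : Fin m => (-1:ℝ)^(i:ℕ) * y i) = m - r - 1 := by omega
      have hSmx : Sm x = r := by omega
      have hSmtil_full : Sm (fun i : Fin m => (-1:ℝ)^(i:ℕ) * y i) + 1
          = (Finset.univ.filter (fun i : Fin m => (-1:ℝ)^(i:ℕ) * y i ≠ 0)).card := by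
        rw [hfiltil]; omega
      have hset : Finset.univ.filter (fun i => y i ≠ 0) = Finset.univ \ Finset.univ.image γ :=
        Finset.eq_of_subset_of_card_le hsub (by omega)
      have hynz : ∀ i : Fin m, i ∉ Finset.univ.image γ → y i ≠ 0 := by
        intro i hi
        have : i ∈ Finset.univ \ Finset.univ.image γ := by
          rw [Finset.mem_sdiff]; exact ⟨Finset.mem_univ _, hi⟩
        rw [← hset] at this
        exact (Finset.mem_filter.mp this).2
      have hnotin : ∀ p : Fin m, (p : ℕ) ≤ (f 0 : ℕ) → p ∉ Finset.univ.image γ := by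
        intro p hp hc
        obtain ⟨t, _, ht⟩ := Finset.mem_image.mp hc
        have h1 : f 0 < γ t := hf (Fin.succ_pos t)
        rw [ht] at h1
        have := Fin.lt_iff_val_lt_val.mp h1
        omega
      set i0 : Fin m := ⟨0, hm⟩ with hi0
      have hy0 : y i0 ≠ 0 := hynz i0 (hnotin i0 (by exact Nat.zero_le _))
      -- construct the completion w
      obtain ⟨w, hagree, hwnz, hSmw0⟩ := SSRAux.exists_completion y hyne
      have hSmw : Sm w = r := by rw [hSmw0, hSpy]
      have hfx : firstNz x = x (g 0) := by
        apply SSRAux.firstNz_eq x (g 0) (hxgne 0)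
        intro k hk
        apply hx0
        intro k' hk'
        have : g 0 ≤ g k' := hg.monotone (Fin.zero_le k')
        rw [← hk'] at this
        have := Fin.le_iff_val_le_val.mp this
        omega
      have hbap := hb x (by rw [← hy]; exact hyne) r (by omega)
        (by rw [← hy]; exact hSpy) hSmx w
        (by intro i hi; rw [← hy] at hi ⊢; rw [hagree i hi, hy])
        hwnz (by rw [← hy, hSpy]; exact hSmw) i0 rfl
      -- compute signs
      have hsx : Real.sign (firstNz x) = ε r := by
        rw [hfx, hxg 0]
        have : ((0 : Fin (r+1)) : ℕ) = 0 := rfl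
        rw [this, pow_zero, one_mul]
        exact (hdne 0).2
      have hwy0 : w i0 = y i0 := hagree i0 hy0
      have hsy0 : Real.sign (y i0) = ε (r+1) := by
        rw [← hwy0, hbap, hsx]
        rcases hsv r with h' | h' <;> rw [h'] <;> ring
      have hbase : 0 < ε (r+1) * y i0 :=
        SSRAux.sign_helper' (hsv (r+1)) hy0 hsy0
      -- propagate along the initial segment
      have halt := SSRAux.Sm_full_alt htilne hSmtil_full
      have hprop : ∀ p : ℕ, (hp : p ≤ (f 0 : ℕ)) → 0 < ε (r+1) * y ⟨p, by omega⟩ := by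
        intro p
        induction p with
        | zero =>
          intro _
          exact hbase
        | succ p ihp =>
          intro hp
          have hplt : p + 1 < m := by
            have := (f 0).isLt
            omega
          have h1 := ihp (by omega)
          have hynzp : y ⟨p, by omega⟩ ≠ 0 :=
            hynz _ (hnotin ⟨p, by omega⟩ (by simpa using by omega))
          have hynzp1 : y ⟨p+1, hplt⟩ ≠ 0 :=
            hynz _ (hnotin ⟨p+1, hplt⟩ (by simpa using hp))
          have hadj := halt p hplt
            (by exact mul_ne_zero (pow_ne_zero _ (by norm_num)) hynzp)
            (by exact mul_ne_zero (pow_ne_zero _ (by norm_num)) hynzp1)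
          simp only [] at hadj
          have hsq : (-1:ℝ)^p * (-1:ℝ)^p = 1 := by
            rw [← pow_add]
            exact Even.neg_one_pow ⟨p, rfl⟩
          have hyy : 0 < y ⟨p, by omega⟩ * y ⟨p+1, hplt⟩ := by
            have hexp : ((-1:ℝ)^p * y ⟨p, by omega⟩) * ((-1:ℝ)^(p+1) * y ⟨p+1, hplt⟩)
                = -(((-1:ℝ)^p * (-1:ℝ)^p) * (y ⟨p, by omega⟩ * y ⟨p+1, hplt⟩)) := by
              rw [pow_succ]; ring
            rw [hexp, hsq, one_mul] at hadj
            linarith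
          rcases hsv (r+1) with h' | h' <;> rw [h'] at h1 ⊢
          · nlinarith
          · nlinarith
      have hfin := hprop (f 0 : ℕ) le_rfl
      have hfeq : (⟨(f 0 : ℕ), by omega⟩ : Fin m) = f 0 := by
        apply Fin.ext
        rfl
      rw [hfeq] at hfin
      have hconsf : Fin.cons (f 0) γ = f := by
        funext i
        refine Fin.cases ?_ ?_ i
        · rw [Fin.cons_zero]
        · intro t
          rw [Fin.cons_succ]
          rfl
      have := hyi (f 0)
      rw [hconsf] at this
      rw [← this]
      exact hfin
  intro r h1 h2 f g hf hg
  exact main r h2 f g hf hg
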